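/- For all integers n ≥ 2 and ℓ with 1 ≤ ℓ ≤ n/2, one has ln( n² / (ℓ² + (n−ℓ)²) ) ≥ (2 ln 2) · ℓ / n. -/
import Mathlib


/-- For integers `n ≥ 2` and `1 ≤ ℓ ≤ n/2`,
`ln(n² / (ℓ² + (n−ℓ)²)) ≥ (2 ln 2)·ℓ/n`. -/
theorem log_purity_factor_bound (n ℓ : ℕ) (hn : 2 ≤ n) (hℓ : 1 ≤ ℓ) (hhalf : 2 * ℓ ≤ n) :
    Real.log ((n : ℝ) ^ 2 / ((ℓ : ℝ) ^ 2 + ((n : ℝ) - (ℓ : ℝ)) ^ 2)) ≥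
      2 * Real.log 2 * (ℓ : ℝ) / (n : ℝ) := by
  have hn0 : (0:ℝ) < n := by exact_mod_cast Nat.lt_of_lt_of_le (by norm_num) hn
  have hℓ0 : (0:ℝ) < ℓ := by exact_mod_cast hℓ
  have hle : 2 * (ℓ:ℝ) ≤ n := by exact_mod_cast hhalf
  set t : ℝ := 2 * ℓ / n with ht
  have ht0 : 0 ≤ t := by positivity
  have ht1 : t ≤ 1 := by rw [ht, div_le_one hn0]; linarith
  have hD : 0 < (ℓ:ℝ)^2 + ((n:ℝ) - ℓ)^2 := by positivity
  have key : 1 + t ≤ (n:ℝ)^2 / ((ℓ:ℝ)^2 + ((n:ℝ) - ℓ)^2) := by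
    rw [le_div_iff₀ hD, ht]
    have h : ((n:ℝ) + 2*ℓ) * ((ℓ:ℝ)^2 + ((n:ℝ) - ℓ)^2) ≤ (n:ℝ)^3 := by nlinarith [sq_nonneg ((ℓ:ℝ))]
    have : (1 + 2*(ℓ:ℝ)/n) = ((n:ℝ) + 2*ℓ)/n := by field_simp
    rw [this, div_mul_eq_mul_div, div_le_iff₀ hn0]
    nlinarith
  have hconc := (strictConcaveOn_log_Ioi.concaveOn).2 (Set.mem_Ioi.2 (by norm_num : (0:ℝ) < 1))
      (Set.mem_Ioi.2 (by norm_num : (0:ℝ) < 2)) (by linarith : (0:ℝ) ≤ 1 - t) ht0 (by ring)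
  have h1 : (1 - t) • (1:ℝ) + t • (2:ℝ) = 1 + t := by simp; ring
  have h2 : (1 - t) • Real.log 1 + t • Real.log 2 = t * Real.log 2 := by
    simp [Real.log_one]
  rw [h1, h2] at hconc
  have hmono : Real.log (1 + t) ≤ Real.log ((n:ℝ)^2 / ((ℓ:ℝ)^2 + ((n:ℝ) - ℓ)^2)) :=
    Real.log_le_log (by positivity) key
  have : 2 * Real.log 2 * (ℓ:ℝ) / n = t * Real.log 2 := by rw [ht]; ring
  rw [ge_iff_le, this]
  linarith
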